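/- Let X be a real Banach space with dim X ≥ 2 that is q-smooth for some q ∈ (1,2], i.e. there exists K > 0 with ρ_X(τ) ≤ Kτ^q for all τ > 0. Let p > 1, F(x) = (1/p)‖x‖^p, and j_p : X → X* a selection of the duality mapping. If p = q, there exists C > 0 such that Δ_F^{j_p(x)}(y,x) ≤ C‖x−y‖^q for all x, y ∈ X. If p ≠ q, then for every τ̄ > 0 there exists C_τ̄ > 0 such that Δ_F^{j_p(x)}(y,x) ≤ C_τ̄ ‖x‖^{p−q}‖x−y‖^q for all x ≠ 0 and y ∈ X with ‖x−y‖ ≤ τ̄‖x‖. -/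

import Mathlib

open scoped ENNReal

/-- The modulus of smoothness of a normed space `Y`:
`ρ_Y(τ) = sup {(‖x+τy‖+‖x−τy‖)/2 − 1 : x, y ∈ S_Y}`. -/
noncomputable def rhoSpace (Y : Type*) [NormedAddCommGroup Y] [NormedSpace ℝ Y] (τ : ℝ) : ℝ :=
  sSup {r : ℝ | ∃ x y : Y, ‖x‖ = 1 ∧ ‖y‖ = 1 ∧ r = (‖x + τ • y‖ + ‖x - τ • y‖) / 2 - 1}

/-- The modulus of convexity of a normed space `Y`:
`δ_Y(ε) = inf {1 − ‖y+ỹ‖/2 : y, ỹ ∈ S_Y, ‖y−ỹ‖ = ε}`. -/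
noncomputable def deltaSpace (Y : Type*) [NormedAddCommGroup Y] [NormedSpace ℝ Y] (ε : ℝ) : ℝ :=
  sInf {r : ℝ | ∃ y z : Y, ‖y‖ = 1 ∧ ‖z‖ = 1 ∧ ‖y - z‖ = ε ∧ r = 1 - ‖y + z‖ / 2}

/-- `φ` is a subgradient of `F` at `x`: `F(y) ≥ F(x) + ⟨φ, y−x⟩` for all `y`. -/
def IsSubgradient {X : Type*} [NormedAddCommGroup X] [NormedSpace ℝ X]
    (F : X → ℝ) (x : X) (φ : X →L[ℝ] ℝ) : Prop :=
  ∀ y : X, F x + φ (y - x) ≤ F y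

/-- The linearization error (Bregman divergence)
`Δ_F^{φ}(y,x) = F(y) − F(x) − ⟨φ, y−x⟩`. -/
def breg {X : Type*} [NormedAddCommGroup X] [NormedSpace ℝ X]
    (F : X → ℝ) (φ : X →L[ℝ] ℝ) (y x : X) : ℝ :=
  F y - F x - φ (y - x)

/-- The modulus of smoothness of `F` at `x` w.r.t. `φ`, with values in `[0,∞]`:
`ρ_{F,x}^{φ}(τ) = sup {|Δ_F^{φ}(y,x)| : ‖y−x‖ = τ}`. -/
noncomputable def rhoF {X : Type*} [NormedAddCommGroup X] [NormedSpace ℝ X]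
    (F : X → ℝ) (x : X) (φ : X →L[ℝ] ℝ) (τ : ℝ) : ℝ≥0∞ :=
  ⨆ y ∈ {y : X | ‖y - x‖ = τ}, ENNReal.ofReal |breg F φ y x|

/-- The modulus of convexity of `F` at `x` w.r.t. `φ`, with values in `[0,∞]`:
`δ_{F,x}^{φ}(τ) = inf {|Δ_F^{φ}(y,x)| : ‖y−x‖ = τ}`. -/
noncomputable def deltaF {X : Type*} [NormedAddCommGroup X] [NormedSpace ℝ X]
    (F : X → ℝ) (x : X) (φ : X →L[ℝ] ℝ) (τ : ℝ) : ℝ≥0∞ :=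
  ⨅ y ∈ {y : X | ‖y - x‖ = τ}, ENNReal.ofReal |breg F φ y x|

/-- `jp` is a selection of the duality mapping with exponent `p`:
`⟨j_p(x), x⟩ = ‖j_p(x)‖·‖x‖` and `‖j_p(x)‖ = ‖x‖^{p−1}` for every `x`. -/
def IsDualitySelection {X : Type*} [NormedAddCommGroup X] [NormedSpace ℝ X]
    (p : ℝ) (jp : X → X →L[ℝ] ℝ) : Prop :=
  ∀ x : X, jp x x = ‖jp x‖ * ‖x‖ ∧ ‖jp x‖ = ‖x‖ ^ (p - 1)


section Aux
open Real Set

lemma taylor2 (p : ℝ) (hp : 1 < p) :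
    ∃ M : ℝ, 0 < M ∧ ∀ s : ℝ, |s - 1| ≤ 1/2 →
      s ^ p ≤ 1 + p * (s - 1) + M * (s - 1)^2 := by
  have hp0 : 0 < p := lt_trans one_pos hp
  have hp1 : 0 < p - 1 := by linarith
  refine ⟨p * (p - 1) * (2 ^ p + 4), by positivity, ?_⟩
  set M := p * (p - 1) * (2 ^ p + 4) with hM
  have hMpos : 0 < M := by positivity
  intro s hs
  rw [abs_le] at hs
  have hs1 : (1/2 : ℝ) ≤ s := by linarith [hs.1]
  have hs2 : s ≤ 3/2 := by linarith [hs.2]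
  -- the auxiliary functions
  set g : ℝ → ℝ := fun s => 1 + p * (s - 1) + M * (s - 1)^2 - s ^ p with hg
  set g1 : ℝ → ℝ := fun s => p + M * (2 * (s - 1)) - p * s ^ (p - 1) with hg1
  -- derivative facts
  have hd : ∀ t : ℝ, t ≠ 0 → HasDerivAt g (g1 t) t := by
    intro t ht
    have h1 : HasDerivAt (fun u : ℝ => u - 1) 1 t := (hasDerivAt_id t).sub_const 1
    have h2 : HasDerivAt (fun u : ℝ => p * (u - 1)) (p * 1) t := h1.const_mul p
    have h3 : HasDerivAt (fun u : ℝ => (u - 1)^2) (2 * (t-1)^(2-1) * 1) t := h1.pow 2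
    have h4 : HasDerivAt (fun u : ℝ => u ^ p) (p * t ^ (p - 1)) t :=
      Real.hasDerivAt_rpow_const (Or.inl ht)
    have := (((hasDerivAt_const t (1:ℝ)).add h2).add (h3.const_mul M)).sub h4
    refine this.congr_deriv ?_
    rw [hg1]
    push_cast
    ring
  have hd1 : ∀ t : ℝ, 0 < t → HasDerivAt g1 (M * 2 - p * ((p-1) * t ^ (p - 2))) t := by
    intro t ht
    have h1 : HasDerivAt (fun u : ℝ => u ^ (p-1)) ((p-1) * t ^ (p - 1 - 1)) t :=
      Real.hasDerivAt_rpow_const (Or.inl (ne_of_gt ht))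
    have h2 : HasDerivAt (fun u : ℝ => u - 1) 1 t := (hasDerivAt_id t).sub_const 1
    have := ((hasDerivAt_const t p).add ((h2.const_mul (2:ℝ)).const_mul M)).sub
      ((h1.const_mul p))
    refine this.congr_deriv ?_
    rw [show p - 1 - 1 = p - 2 by ring]; ring
  -- second derivative nonneg on [1/2, 3/2]
  have hsnd : ∀ t : ℝ, t ∈ Ioo (1/2 : ℝ) (3/2) → 0 ≤ M * 2 - p * ((p-1) * t ^ (p - 2)) := by
    intro t ht
    have ht0 : (0:ℝ) < t := by linarith [ht.1]
    have hb : t ^ (p - 2) ≤ 2 ^ p + 4 := by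
      rcases le_or_gt 2 p with h2p | h2p
      · have : t ^ (p-2) ≤ 2 ^ (p-2) :=
          Real.rpow_le_rpow (le_of_lt ht0) (by linarith [ht.2]) (by linarith)
        have h22 : (2:ℝ) ^ (p-2) ≤ 2 ^ p :=
          Real.rpow_le_rpow_of_exponent_le one_le_two (by linarith)
        linarith
      · have h1 : t ^ (p-2) ≤ (1/2 : ℝ) ^ (p-2) :=
          Real.rpow_le_rpow_of_nonpos (by norm_num) (le_of_lt ht.1) (by linarith)
        have h2 : (1/2 : ℝ) ^ (p-2) = 2 ^ (2-p) := by
          rw [show (1/2:ℝ) = 2⁻¹ by norm_num, ← Real.rpow_neg_one,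
            ← Real.rpow_mul (by norm_num)]
          norm_num
        have h3 : (2:ℝ) ^ (2-p) ≤ 2 ^ (1:ℝ) :=
          Real.rpow_le_rpow_of_exponent_le one_le_two (by linarith)
        have h4 : (2:ℝ) ^ (1:ℝ) = 2 := Real.rpow_one 2
        have h5 : (0:ℝ) < 2 ^ p := Real.rpow_pos_of_pos (by norm_num) p
        linarith
    have : p * ((p-1) * t ^ (p-2)) ≤ p * ((p-1) * (2 ^ p + 4)) := by
      apply mul_le_mul_of_nonneg_left _ (le_of_lt hp0)
      apply mul_le_mul_of_nonneg_left hb (le_of_lt hp1)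
    have : p * ((p-1) * t ^ (p-2)) ≤ M := by rw [hM]; linarith [this]
    linarith [hMpos]
  have hg1one : g1 1 = 0 := by simp [hg1, Real.one_rpow]
  have hgone : g 1 = 0 := by simp [hg, Real.one_rpow]
  have hg1mono : MonotoneOn g1 (Icc (1/2:ℝ) (3/2)) := by
    apply monotoneOn_of_deriv_nonneg (convex_Icc _ _)
    · exact fun t ht => (hd1 t (by linarith [ht.1])).continuousAt.continuousWithinAt
    · intro t ht
      rw [interior_Icc] at ht
      exact (hd1 t (by linarith [ht.1])).differentiableAt.differentiableWithinAt
    · intro t ht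
      rw [interior_Icc] at ht
      rw [(hd1 t (by linarith [ht.1])).deriv]
      exact hsnd t ht
  have key : 0 ≤ g s := by
    rcases le_total s 1 with hle | hle
    · have hanti : AntitoneOn g (Icc (1/2:ℝ) 1) := by
        apply antitoneOn_of_deriv_nonpos (convex_Icc _ _)
        · intro t ht
          have ht0 : t ≠ 0 := by rintro rfl; simp [Set.mem_Icc] at ht; norm_num at ht
          exact (hd t ht0).continuousAt.continuousWithinAt
        · intro t ht
          rw [interior_Icc] at ht
          exact (hd t (by intro h; rw [h] at ht; exact absurd ht.1 (by norm_num))).differentiableAt.differentiableWithinAt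
        · intro t ht
          rw [interior_Icc] at ht
          have ht0 : t ≠ 0 := by intro h; rw [h] at ht; exact absurd ht.1 (by norm_num)
          rw [(hd t ht0).deriv]
          have := hg1mono (Set.mem_Icc.2 ⟨le_of_lt ht.1, by linarith [ht.2]⟩)
            (Set.mem_Icc.2 ⟨by norm_num, by norm_num⟩) (le_of_lt ht.2)
          rw [hg1one] at this
          exact this
      have := hanti (Set.mem_Icc.2 ⟨hs1, hle⟩) (Set.mem_Icc.2 ⟨by norm_num, le_refl 1⟩) hle
      rw [hgone] at this
      exact this
    · have hmono : MonotoneOn g (Icc (1:ℝ) (3/2)) := by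
        apply monotoneOn_of_deriv_nonneg (convex_Icc _ _)
        · intro t ht
          have ht0 : t ≠ 0 := by rintro rfl; simp [Set.mem_Icc] at ht; norm_num at ht
          exact (hd t ht0).continuousAt.continuousWithinAt
        · intro t ht
          rw [interior_Icc] at ht
          exact (hd t (by intro h; rw [h] at ht; exact absurd ht.1 (by norm_num))).differentiableAt.differentiableWithinAt
        · intro t ht
          rw [interior_Icc] at ht
          have ht0 : t ≠ 0 := by intro h; rw [h] at ht; exact absurd ht.1 (by norm_num)
          rw [(hd t ht0).deriv]
          have := hg1mono (Set.mem_Icc.2 ⟨by norm_num, by norm_num⟩)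
            (Set.mem_Icc.2 ⟨by linarith [ht.1], by linarith [ht.2]⟩) (le_of_lt ht.1)
          rw [hg1one] at this
          exact this
      have := hmono (Set.mem_Icc.2 ⟨le_refl 1, by norm_num⟩) (Set.mem_Icc.2 ⟨hle, hs2⟩) hle
      rw [hgone] at this
      exact this
  have key' : 0 ≤ 1 + p * (s - 1) + M * (s - 1)^2 - s ^ p := key
  linarith

lemma taylor2' (p M a t : ℝ) (ha : 0 < a) (ht : |t| ≤ a/2)
    (htay : ∀ s : ℝ, |s - 1| ≤ 1/2 → s ^ p ≤ 1 + p * (s - 1) + M * (s - 1)^2) :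
    (a + t) ^ p ≤ a ^ p + p * a ^ (p-1) * t + M * a ^ (p-2) * t^2 := by
  have hta := abs_le.1 ht
  have hs : |1 + t/a - 1| ≤ 1/2 := by
    rw [add_sub_cancel_left, abs_div, abs_of_pos ha, div_le_iff₀ ha]
    linarith [ht]
  have hspos : 0 < 1 + t/a := by
    have : -(1/2 : ℝ) ≤ t/a := by
      rw [neg_le, ← neg_div, div_le_iff₀ ha]
      linarith [hta.1]
    linarith
  have h1 := htay (1 + t/a) hs
  simp only [add_sub_cancel_left] at h1
  have heq : a + t = a * (1 + t/a) := by field_simp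
  have ha2 : a ^ (2:ℝ) = a ^ (2:ℕ) := by
    rw [← Real.rpow_natCast a 2]; norm_num
  calc (a+t)^p = a^p * (1+t/a)^p := by
        rw [heq, Real.mul_rpow (le_of_lt ha) (le_of_lt hspos)]
    _ ≤ a^p * (1 + p*(t/a) + M*(t/a)^2) := by
        apply mul_le_mul_of_nonneg_left h1 (Real.rpow_nonneg (le_of_lt ha) p)
    _ = a^p + p * a^(p-1) * t + M * a^(p-2) * t^2 := by
        rw [Real.rpow_sub ha, Real.rpow_sub ha, Real.rpow_one, ha2]
        field_simp

lemma smooth_bound {X : Type*} [NormedAddCommGroup X] [NormedSpace ℝ X]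
    (q K : ℝ) (hK : 0 < K) (hrho : ∀ τ : ℝ, 0 < τ → rhoSpace X τ ≤ K * τ ^ q)
    (p : ℝ) (hp : 1 < p) (jp : X → X →L[ℝ] ℝ) (hjp : IsDualitySelection p jp)
    (x h : X) (hx : x ≠ 0) (hh : h ≠ 0) :
    ‖x‖ ^ (p-1) * ‖x + h‖ ≤ ‖x‖ ^ p + jp x h + 2*K*‖x‖^(p-q)*‖h‖^q := by
  set a := ‖x‖ with had
  set b := ‖h‖ with hbd
  have ha : 0 < a := norm_pos_iff.2 hx
  have hb : 0 < b := norm_pos_iff.2 hh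
  set τ := b / a with hτd
  have hτ : 0 < τ := div_pos hb ha
  set u : X := a⁻¹ • x with hud
  set v : X := b⁻¹ • h with hvd
  have hu : ‖u‖ = 1 := by
    rw [hud, norm_smul, norm_inv, Real.norm_eq_abs, abs_of_pos ha, ← had,
      inv_mul_cancel₀ (ne_of_gt ha)]
  have hv : ‖v‖ = 1 := by
    rw [hvd, norm_smul, norm_inv, Real.norm_eq_abs, abs_of_pos hb, ← hbd,
      inv_mul_cancel₀ (ne_of_gt hb)]
  have hbdd : BddAbove {r : ℝ | ∃ x y : X, ‖x‖ = 1 ∧ ‖y‖ = 1 ∧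
      r = (‖x + τ • y‖ + ‖x - τ • y‖) / 2 - 1} := by
    refine ⟨τ, ?_⟩
    rintro r ⟨z, w, hz, hw, rfl⟩
    have h1 : ‖z + τ • w‖ ≤ 1 + τ := by
      calc ‖z + τ • w‖ ≤ ‖z‖ + ‖τ • w‖ := norm_add_le _ _
        _ = 1 + τ := by rw [hz, norm_smul, hw, Real.norm_eq_abs, abs_of_pos hτ, mul_one]
    have h2 : ‖z - τ • w‖ ≤ 1 + τ := by
      calc ‖z - τ • w‖ ≤ ‖z‖ + ‖τ • w‖ := norm_sub_le _ _
        _ = 1 + τ := by rw [hz, norm_smul, hw, Real.norm_eq_abs, abs_of_pos hτ, mul_one]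
    linarith
  have hmem : (‖u + τ • v‖ + ‖u - τ • v‖) / 2 - 1 ∈ {r : ℝ | ∃ x y : X, ‖x‖ = 1 ∧ ‖y‖ = 1 ∧
      r = (‖x + τ • y‖ + ‖x - τ • y‖) / 2 - 1} := ⟨u, v, hu, hv, rfl⟩
  have hle : (‖u + τ • v‖ + ‖u - τ • v‖) / 2 - 1 ≤ K * τ ^ q :=
    le_trans (le_csSup hbdd hmem) (hrho τ hτ)
  have hτv : τ • v = a⁻¹ • h := by
    rw [hvd, smul_smul]
    congr 1
    rw [hτd]
    field_simp
  have hupv : ‖u + τ • v‖ = a⁻¹ * ‖x + h‖ := by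
    rw [hτv, hud, ← smul_add, norm_smul, norm_inv, Real.norm_eq_abs, abs_of_pos ha]
  have humv : ‖u - τ • v‖ = a⁻¹ * ‖x - h‖ := by
    rw [hτv, hud, ← smul_sub, norm_smul, norm_inv, Real.norm_eq_abs, abs_of_pos ha]
  -- main norm inequality
  have hmain : ‖x + h‖ + ‖x - h‖ ≤ 2*a + 2*K*a*τ^q := by
    rw [hupv, humv] at hle
    have := mul_le_mul_of_nonneg_left hle (le_of_lt ha)
    have h2 : a * ((a⁻¹ * ‖x + h‖ + a⁻¹ * ‖x - h‖)/2 - 1) =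
        (‖x + h‖ + ‖x - h‖)/2 - a := by
      field_simp
    rw [h2] at this
    linarith
  -- duality bounds
  have hjx := (hjp x).1
  have hjn := (hjp x).2
  have hjxx : jp x x = a ^ (p-1) * a := by rw [hjx, hjn]
  have hjph : jp x (x - h) ≤ a^(p-1) * ‖x - h‖ := by
    calc jp x (x - h) ≤ ‖jp x (x - h)‖ := Real.le_norm_self _
      _ ≤ ‖jp x‖ * ‖x - h‖ := (jp x).le_opNorm _
      _ = a^(p-1) * ‖x - h‖ := by rw [hjn]
  have hsub : jp x (x - h) = a^(p-1) * a - jp x h := by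
    rw [map_sub, hjxx]
  have hxh : a^p - jp x h ≤ a^(p-1) * ‖x - h‖ := by
    have hap : a^(p-1) * a = a^p := by
      rw [← Real.rpow_add_one (ne_of_gt ha) (p-1)]; norm_num
    rw [← hap]
    linarith [hjph, hsub.symm.le, hsub.le]
  -- multiply hmain by a^(p-1)
  have hepos : (0:ℝ) < a^(p-1) := Real.rpow_pos_of_pos ha _
  have hmul := mul_le_mul_of_nonneg_left hmain (le_of_lt hepos)
  have hap : a^(p-1) * a = a^p := by
    rw [← Real.rpow_add_one (ne_of_gt ha) (p-1)]; norm_num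
  have hτq : a^p * τ^q = a^(p-q) * b^q := by
    rw [hτd, Real.div_rpow (le_of_lt hb) (le_of_lt ha), Real.rpow_sub ha]
    field_simp
  calc a^(p-1) * ‖x + h‖
      = a^(p-1) * (‖x + h‖ + ‖x - h‖) - a^(p-1) * ‖x - h‖ := by ring
    _ ≤ a^(p-1) * (2*a + 2*K*a*τ^q) - (a^p - jp x h) := by
        have h1 := mul_le_mul_of_nonneg_left hmain (le_of_lt hepos)
        linarith [hxh]
    _ = 2*a^p + 2*K*(a^p * τ^q) - a^p + jp x h := by
        rw [mul_add, show a^(p-1) * (2*a) = 2*(a^(p-1)*a) by ring, hap]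
        have : a^(p-1) * (2*K*a*τ^q) = 2*K*((a^(p-1)*a)*τ^q) := by ring
        rw [this, hap]
        ring
    _ = a^p + jp x h + 2*K*a^(p-q)*b^q := by rw [hτq]; ring

lemma crude_bound {X : Type*} [NormedAddCommGroup X] [NormedSpace ℝ X]
    (p : ℝ) (hp : 1 < p) (jp : X → X →L[ℝ] ℝ) (hjp : IsDualitySelection p jp)
    (x y : X) :
    breg (fun z : X => (1 / p) * ‖z‖ ^ p) (jp x) y x ≤
      (1/p) * (‖x‖ + ‖x - y‖) ^ p + ‖x‖ ^ (p-1) * ‖x - y‖ := by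
  have hp0 : (0:ℝ) < p := lt_trans one_pos hp
  have h1 : ‖y‖ ≤ ‖x‖ + ‖x - y‖ := by
    calc ‖y‖ = ‖x - (x - y)‖ := by rw [sub_sub_cancel]
      _ ≤ ‖x‖ + ‖x - y‖ := norm_sub_le _ _
  have h2 : ‖y‖ ^ p ≤ (‖x‖ + ‖x - y‖) ^ p :=
    Real.rpow_le_rpow (norm_nonneg _) h1 (le_of_lt hp0)
  have h3 : -(jp x (y - x)) ≤ ‖x‖ ^ (p-1) * ‖x - y‖ := by
    calc -(jp x (y - x)) ≤ ‖jp x (y - x)‖ := by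
          rw [Real.norm_eq_abs]; exact neg_le_abs _
      _ ≤ ‖jp x‖ * ‖y - x‖ := (jp x).le_opNorm _
      _ = ‖x‖ ^ (p-1) * ‖x - y‖ := by rw [(hjp x).2, norm_sub_rev]
  have h4 : (0:ℝ) ≤ (1/p) * ‖x‖ ^ p := by positivity
  simp only [breg]
  have h5 : (1/p) * ‖y‖ ^ p ≤ (1/p) * (‖x‖ + ‖x - y‖) ^ p := by
    apply mul_le_mul_of_nonneg_left h2 (by positivity)
  linarith

lemma central_bound {X : Type*} [NormedAddCommGroup X] [NormedSpace ℝ X]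
    (q K p M : ℝ) (hq1 : 1 < q) (hq2 : q ≤ 2) (hK : 0 < K) (hp : 1 < p) (hM : 0 < M)
    (htay : ∀ s : ℝ, |s - 1| ≤ 1/2 → s ^ p ≤ 1 + p * (s - 1) + M * (s - 1)^2)
    (hrho : ∀ τ : ℝ, 0 < τ → rhoSpace X τ ≤ K * τ ^ q)
    (jp : X → X →L[ℝ] ℝ) (hjp : IsDualitySelection p jp)
    (x y : X) (hx : x ≠ 0) (hxy : ‖y - x‖ ≤ (1/(2+4*K)) * ‖x‖) :
    breg (fun z : X => (1 / p) * ‖z‖ ^ p) (jp x) y x ≤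
      ((2*p*K + M*(1+2*K)^2)/p) * (‖x‖ ^ (p-q) * ‖x - y‖ ^ q) := by
  have hp0 : (0:ℝ) < p := lt_trans one_pos hp
  have hq0 : (0:ℝ) < q := lt_trans one_pos hq1
  have ha : (0:ℝ) < ‖x‖ := norm_pos_iff.2 hx
  by_cases hh : y - x = 0
  · have hy : y = x := by rwa [sub_eq_zero] at hh
    subst hy
    simp only [breg, sub_self, map_zero, Real.zero_rpow (ne_of_gt hq0),
      norm_zero, mul_zero, sub_zero]
    simp
  · set a := ‖x‖ with had
    set h := y - x with hhd
    set b := ‖h‖ with hbd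
    have hb : 0 < b := norm_pos_iff.2 hh
    have hxmy : ‖x - y‖ = b := by rw [hbd, hhd, norm_sub_rev]
    have hba : b ≤ a := by
      calc b ≤ (1/(2+4*K)) * a := hxy
        _ ≤ 1 * a := by
            apply mul_le_mul_of_nonneg_right _ (le_of_lt ha)
            rw [div_le_one (by linarith)]
            linarith
        _ = a := one_mul a
    set e := a ^ (p-1) with hed
    have he : 0 < e := Real.rpow_pos_of_pos ha _
    have hap : e * a = a ^ p := by
      rw [hed, ← Real.rpow_add_one (ne_of_gt ha) (p-1)]; norm_num
    -- the smoothness estimate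
    have hsb := smooth_bound q K hK hrho p hp jp hjp x h hx hh
    set t := (jp x h + 2*K*a^(p-q)*b^q) / e with htd
    have het : e * t = jp x h + 2*K*a^(p-q)*b^q := by
      rw [htd, mul_div_cancel₀ _ (ne_of_gt he)]
    have hxh : ‖x + h‖ ≤ a + t := by
      have h1 : e * ‖x + h‖ ≤ e * (a + t) := by
        rw [mul_add, hap, het]
        calc e * ‖x + h‖ ≤ a^p + jp x h + 2*K*a^(p-q)*b^q := hsb
          _ = a^p + (jp x h + 2*K*a^(p-q)*b^q) := by ring
      exact le_of_mul_le_mul_left h1 he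
    -- bound on |t|
    have hjb : |jp x h| ≤ e * b := by
      calc |jp x h| = ‖jp x h‖ := (Real.norm_eq_abs _).symm
        _ ≤ ‖jp x‖ * ‖h‖ := (jp x).le_opNorm _
        _ = e * b := by rw [(hjp x).2, hed, hbd, had]
    have hpow : a^(p-q) * b^q ≤ e * b := by
      have h1 : b^q = b^(q-1) * b := by
        rw [← Real.rpow_add_one (ne_of_gt hb) (q-1)]; norm_num
      have h2 : b^(q-1) ≤ a^(q-1) :=
        Real.rpow_le_rpow (le_of_lt hb) hba (by linarith)
      have h3 : a^(p-q) * a^(q-1) = e := by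
        rw [hed, ← Real.rpow_add ha]; ring_nf
      calc a^(p-q) * b^q = a^(p-q) * b^(q-1) * b := by rw [h1]; ring
        _ ≤ a^(p-q) * a^(q-1) * b := by
            apply mul_le_mul_of_nonneg_right _ (le_of_lt hb)
            exact mul_le_mul_of_nonneg_left h2 (le_of_lt (Real.rpow_pos_of_pos ha _))
        _ = e * b := by rw [h3]
    have htb : |t| ≤ (1+2*K) * b := by
      rw [htd, abs_div, abs_of_pos he, div_le_iff₀ he]
      calc |jp x h + 2*K*a^(p-q)*b^q| ≤ |jp x h| + |2*K*a^(p-q)*b^q| := abs_add_le _ _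
        _ ≤ e*b + 2*K*(a^(p-q)*b^q) := by
            rw [abs_of_nonneg (by positivity : (0:ℝ) ≤ 2*K*a^(p-q)*b^q)]
            linarith [hjb]
        _ ≤ e*b + 2*K*(e*b) := by nlinarith [hpow]
        _ = (1+2*K)*b*e := by ring
    have hta : |t| ≤ a / 2 := by
      calc |t| ≤ (1+2*K) * b := htb
        _ ≤ (1+2*K) * ((1/(2+4*K)) * a) := by
            apply mul_le_mul_of_nonneg_left hxy (by linarith)
        _ = a / 2 := by field_simp; ring
    -- apply the Taylor bound
    have htay' := taylor2' p M a t ha hta htay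
    have hxhp : ‖x + h‖ ^ p ≤ (a + t) ^ p := by
      apply Real.rpow_le_rpow (norm_nonneg _) hxh (le_of_lt hp0)
    have hyx : y = x + h := by rw [hhd]; abel
    -- t^2 bound
    have ht2 : t^2 ≤ (1+2*K)^2 * b^2 := by nlinarith [abs_nonneg t, sq_abs t, htb]
    have hb2 : a^(p-2) * b^2 ≤ a^(p-q) * b^q := by
      have h1 : (b:ℝ)^(2:ℕ) = b^(q) * b^(2-q) := by
        rw [← Real.rpow_add hb, ← Real.rpow_natCast b 2]
        norm_num
      have h2 : b^(2-q) ≤ a^(2-q) :=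
        Real.rpow_le_rpow (le_of_lt hb) hba (by linarith)
      have h3 : a^(p-2) * a^(2-q) = a^(p-q) := by
        rw [← Real.rpow_add ha]; ring_nf
      calc a^(p-2) * b^2 = a^(p-2) * b^(2-q) * b^q := by rw [h1]; ring
        _ ≤ a^(p-2) * a^(2-q) * b^q := by
            apply mul_le_mul_of_nonneg_right _ (le_of_lt (Real.rpow_pos_of_pos hb _))
            exact mul_le_mul_of_nonneg_left h2 (le_of_lt (Real.rpow_pos_of_pos ha _))
        _ = a^(p-q) * b^q := by rw [h3]
    -- put it together
    have key : p * breg (fun z : X => (1 / p) * ‖z‖ ^ p) (jp x) y x ≤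
        (2*p*K + M*(1+2*K)^2) * (a^(p-q) * b^q) := by
      have hbreg : p * breg (fun z : X => (1 / p) * ‖z‖ ^ p) (jp x) y x =
          ‖x + h‖^p - a^p - p * jp x h := by
        simp only [breg, ← hhd, hyx]
        field_simp
        rw [add_sub_cancel_left]
      rw [hbreg]
      have hpet : p * a^(p-1) * t = p * (jp x h) + p * (2*K*(a^(p-q)*b^q)) := by
        have : a^(p-1) = e := rfl
        rw [this, mul_assoc, het]
        ring
      have htrans : ‖x + h‖^p ≤ a^p + p * a^(p-1) * t + M * a^(p-2) * t^2 :=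
        le_trans hxhp htay'
      have step2 : M * (a^(p-2) * t^2) ≤ M * (1+2*K)^2 * (a^(p-q)*b^q) := by
        have h1 : a^(p-2) * t^2 ≤ a^(p-2) * ((1+2*K)^2 * b^2) :=
          mul_le_mul_of_nonneg_left ht2 (le_of_lt (Real.rpow_pos_of_pos ha _))
        calc M * (a^(p-2) * t^2) ≤ M * (a^(p-2) * ((1+2*K)^2 * b^2)) :=
              mul_le_mul_of_nonneg_left h1 (le_of_lt hM)
          _ = M * (1+2*K)^2 * (a^(p-2) * b^2) := by ring
          _ ≤ M * (1+2*K)^2 * (a^(p-q) * b^q) :=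
              mul_le_mul_of_nonneg_left hb2 (by positivity)
      have step1 : M * a^(p-2) * t^2 = M * (a^(p-2) * t^2) := by ring
      linarith
    rw [hxmy, div_mul_eq_mul_div, le_div_iff₀ hp0]
    linarith [key]

end Aux

/-- if `X` is `q`-smooth for some `q ∈ (1,2]` and `F = (1/p)‖·‖^p`, then:
if `p = q` there is `C > 0` with `Δ_F^{j_p(x)}(y,x) ≤ C‖x−y‖^q` for all `x, y`; and if
`p ≠ q` then for every `τ̄ > 0` there is `C > 0` with
`Δ_F^{j_p(x)}(y,x) ≤ C‖x‖^{p−q}‖x−y‖^q` whenever `x ≠ 0` and `‖x−y‖ ≤ τ̄‖x‖`. -/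

theorem stmt18 (X : Type*) [NormedAddCommGroup X] [NormedSpace ℝ X] [CompleteSpace X]
    (hdim : 2 ≤ Module.rank ℝ X)
    (q : ℝ) (hq1 : 1 < q) (hq2 : q ≤ 2)
    (hsmooth : ∃ K : ℝ, 0 < K ∧ ∀ τ : ℝ, 0 < τ → rhoSpace X τ ≤ K * τ ^ q)
    (p : ℝ) (hp : 1 < p)
    (jp : X → X →L[ℝ] ℝ) (hjp : IsDualitySelection p jp) :
    (p = q → ∃ C : ℝ, 0 < C ∧ ∀ x y : X,
      breg (fun z : X => (1 / p) * ‖z‖ ^ p) (jp x) y x ≤ C * ‖x - y‖ ^ q) ∧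
    (p ≠ q → ∀ τbar : ℝ, 0 < τbar → ∃ C : ℝ, 0 < C ∧
      ∀ x y : X, x ≠ 0 → ‖x - y‖ ≤ τbar * ‖x‖ →
        breg (fun z : X => (1 / p) * ‖z‖ ^ p) (jp x) y x ≤
          C * ‖x‖ ^ (p - q) * ‖x - y‖ ^ q) := by
  classical
  obtain ⟨K, hK, hrho⟩ := hsmooth
  obtain ⟨M, hM, htay⟩ := taylor2 p hp
  have hp0 : (0:ℝ) < p := lt_trans one_pos hp
  have hq0 : (0:ℝ) < q := lt_trans one_pos hq1
  have hεd : (0:ℝ) < 2 + 4*K := by linarith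
  have hε : (0:ℝ) < 1/(2+4*K) := by positivity
  set ε : ℝ := 1/(2+4*K) with hεdef
  have hεinv : (0:ℝ) < ε⁻¹ := by positivity
  constructor
  · -- case p = q
    intro hpq
    subst hpq
    set C₁ : ℝ := (2*p*K + M*(1+2*K)^2)/p with hC1
    set C₂ : ℝ := (1/p)*(ε⁻¹+1)^p + ε⁻¹^(p-1) with hC2
    have hC1pos : 0 < C₁ := by
      rw [hC1]; positivity
    have hC2pos : 0 < C₂ := by
      rw [hC2]; positivity
    refine ⟨C₁ + C₂, by linarith, ?_⟩
    intro x y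
    by_cases hcase : x ≠ 0 ∧ ‖y - x‖ ≤ ε * ‖x‖
    · have hc := central_bound p K p M hp hq2 hK hp hM htay hrho jp hjp x y hcase.1
        (by rw [← hεdef]; exact hcase.2)
      have hpp : p - p = 0 := by ring
      rw [hpp, Real.rpow_zero, one_mul] at hc
      have hnn : 0 ≤ ‖x - y‖ ^ p := Real.rpow_nonneg (norm_nonneg _) p
      calc breg (fun z : X => (1 / p) * ‖z‖ ^ p) (jp x) y x ≤ C₁ * ‖x - y‖ ^ p := hc
        _ ≤ (C₁ + C₂) * ‖x - y‖ ^ p := by nlinarith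
    · have hxb : ‖x‖ ≤ ε⁻¹ * ‖x - y‖ := by
        rcases not_and_or.1 hcase with hx0 | hgt
        · push_neg at hx0
          rw [hx0, norm_zero]
          positivity
        · push_neg at hgt
          rw [norm_sub_rev x y]
          rw [← mul_le_mul_iff_of_pos_left hε, ← mul_assoc, mul_inv_cancel₀ (ne_of_gt hε),
            one_mul]
          exact le_of_lt hgt
      by_cases hb0 : ‖x - y‖ = 0
      · have hxy : x = y := by
          rw [← sub_eq_zero]; exact norm_eq_zero.1 hb0
        subst hxy
        simp [breg, Real.zero_rpow (ne_of_gt hp0)]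
      · have hb : 0 < ‖x - y‖ := lt_of_le_of_ne (norm_nonneg _) (Ne.symm hb0)
        set b := ‖x - y‖ with hbd
        have hcr := crude_bound p hp jp hjp x y
        have h1 : ‖x‖ + b ≤ (ε⁻¹ + 1) * b := by nlinarith [hxb]
        have h2 : (‖x‖ + b) ^ p ≤ (ε⁻¹+1)^p * b^p := by
          rw [← Real.mul_rpow (by positivity) (le_of_lt hb)]
          exact Real.rpow_le_rpow (by positivity) h1 (le_of_lt hp0)
        have h3 : ‖x‖ ^ (p-1) ≤ ε⁻¹^(p-1) * b^(p-1) := by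
          rw [← Real.mul_rpow (le_of_lt hεinv) (le_of_lt hb)]
          exact Real.rpow_le_rpow (norm_nonneg _) hxb (by linarith)
        have h4 : b^(p-1) * b = b^p := by
          rw [← Real.rpow_add_one (ne_of_gt hb) (p-1)]; norm_num
        have h5 : ‖x‖ ^ (p-1) * b ≤ ε⁻¹^(p-1) * b^p := by
          calc ‖x‖ ^ (p-1) * b ≤ (ε⁻¹^(p-1) * b^(p-1)) * b :=
                mul_le_mul_of_nonneg_right h3 (le_of_lt hb)
            _ = ε⁻¹^(p-1) * (b^(p-1) * b) := by ring
            _ = ε⁻¹^(p-1) * b^p := by rw [h4]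
        have h6 : (1/p) * (‖x‖ + b)^p ≤ (1/p) * ((ε⁻¹+1)^p * b^p) :=
          mul_le_mul_of_nonneg_left h2 (by positivity)
        have hnn : 0 ≤ b ^ p := Real.rpow_nonneg (norm_nonneg _) p
        calc breg (fun z : X => (1 / p) * ‖z‖ ^ p) (jp x) y x
            ≤ (1/p) * (‖x‖ + b)^p + ‖x‖^(p-1) * b := hcr
          _ ≤ (1/p) * ((ε⁻¹+1)^p * b^p) + ε⁻¹^(p-1) * b^p := by linarith
          _ = C₂ * b^p := by rw [hC2]; ring
          _ ≤ (C₁ + C₂) * b^p := by nlinarith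
  · -- case p ≠ q
    intro hpq τbar hτbar
    set C₁ : ℝ := (2*p*K + M*(1+2*K)^2)/p with hC1
    set C₃ : ℝ := ((1/p)*(1+τbar)^p + τbar) * ε⁻¹^q with hC3
    have hC1pos : 0 < C₁ := by rw [hC1]; positivity
    have hC3pos : 0 < C₃ := by rw [hC3]; positivity
    refine ⟨C₁ + C₃, by linarith, ?_⟩
    intro x y hx hle
    have ha : (0:ℝ) < ‖x‖ := norm_pos_iff.2 hx
    have hAnn : 0 ≤ ‖x‖^(p-q) := Real.rpow_nonneg (norm_nonneg _) _
    have hBnn : 0 ≤ ‖x - y‖^q := Real.rpow_nonneg (norm_nonneg _) _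
    by_cases hcase : ‖y - x‖ ≤ ε * ‖x‖
    · have hc := central_bound q K p M hq1 hq2 hK hp hM htay hrho jp hjp x y hx
        (by rw [← hεdef]; exact hcase)
      rw [← hC1] at hc
      have h10 : 0 ≤ ‖x‖^(p-q) * ‖x - y‖^q := mul_nonneg hAnn hBnn
      have h11 : 0 ≤ C₃ * (‖x‖^(p-q) * ‖x - y‖^q) := mul_nonneg (le_of_lt hC3pos) h10
      calc breg (fun z : X => (1 / p) * ‖z‖ ^ p) (jp x) y x
          ≤ C₁ * (‖x‖^(p-q) * ‖x - y‖^q) := hc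
        _ ≤ (C₁ + C₃) * ‖x‖^(p-q) * ‖x - y‖^q := by
            have : (C₁ + C₃) * ‖x‖^(p-q) * ‖x - y‖^q =
                C₁ * (‖x‖^(p-q) * ‖x - y‖^q) + C₃ * (‖x‖^(p-q) * ‖x - y‖^q) := by ring
            linarith
    · push_neg at hcase
      rw [norm_sub_rev y x] at hcase
      set a := ‖x‖ with had
      set b := ‖x - y‖ with hbd
      have hb : 0 < b := lt_trans (by positivity) hcase
      have hab : a ≤ ε⁻¹ * b := by
        rw [← mul_le_mul_iff_of_pos_left hε, ← mul_assoc, mul_inv_cancel₀ (ne_of_gt hε),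
          one_mul]
        exact le_of_lt hcase
      have hcr := crude_bound p hp jp hjp x y
      have hap : a^(p-1) * a = a^p := by
        rw [← Real.rpow_add_one (ne_of_gt ha) (p-1)]; norm_num
      have h1 : a + b ≤ (1+τbar) * a := by nlinarith [hle]
      have h2 : (a + b)^p ≤ (1+τbar)^p * a^p := by
        rw [← Real.mul_rpow (by positivity) (le_of_lt ha)]
        exact Real.rpow_le_rpow (by positivity) h1 (le_of_lt hp0)
      have h3 : a^(p-1) * b ≤ τbar * a^p := by
        calc a^(p-1) * b ≤ a^(p-1) * (τbar * a) :=
              mul_le_mul_of_nonneg_left hle (le_of_lt (Real.rpow_pos_of_pos ha _))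
          _ = τbar * (a^(p-1) * a) := by ring
          _ = τbar * a^p := by rw [hap]
      have h4 : a^p ≤ ε⁻¹^q * (a^(p-q) * b^q) := by
        have h5 : a^q ≤ ε⁻¹^q * b^q := by
          rw [← Real.mul_rpow (le_of_lt hεinv) (le_of_lt hb)]
          exact Real.rpow_le_rpow (le_of_lt ha) hab (le_of_lt hq0)
        have h6 : a^p = a^(p-q) * a^q := by
          rw [← Real.rpow_add ha]; ring_nf
        calc a^p = a^(p-q) * a^q := h6
          _ ≤ a^(p-q) * (ε⁻¹^q * b^q) :=
              mul_le_mul_of_nonneg_left h5 hAnn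
          _ = ε⁻¹^q * (a^(p-q) * b^q) := by ring
      have h7 : (1/p) * (a + b)^p ≤ (1/p) * ((1+τbar)^p * a^p) :=
        mul_le_mul_of_nonneg_left h2 (by positivity)
      have h8 : ((1/p)*(1+τbar)^p + τbar) * a^p ≤
          ((1/p)*(1+τbar)^p + τbar) * (ε⁻¹^q * (a^(p-q) * b^q)) := by
        apply mul_le_mul_of_nonneg_left h4 (by positivity)
      calc breg (fun z : X => (1 / p) * ‖z‖ ^ p) (jp x) y x
          ≤ (1/p) * (a + b)^p + a^(p-1) * b := hcr
        _ ≤ ((1/p)*(1+τbar)^p + τbar) * a^p := by linarith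
        _ ≤ ((1/p)*(1+τbar)^p + τbar) * (ε⁻¹^q * (a^(p-q) * b^q)) := h8
        _ = C₃ * (a^(p-q) * b^q) := by rw [hC3]; ring
        _ ≤ (C₁ + C₃) * a^(p-q) * b^q := by
            have h10 : 0 ≤ a^(p-q) * b^q := mul_nonneg hAnn hBnn
            have h11 : 0 ≤ C₁ * (a^(p-q) * b^q) := mul_nonneg (le_of_lt hC1pos) h10
            have h12 : (C₁ + C₃) * a^(p-q) * b^q =
                C₁ * (a^(p-q) * b^q) + C₃ * (a^(p-q) * b^q) := by ring
            linarith
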